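/- Fix a real number β > −1 and an integer n ≥ 0. For ε ∈ ℝ, ε ≠ 0, set q = −e^{ε}, b = −e^{βε}, a = q², and define A_m = q^m (1−aq^{m+1})(1−abq^{m+1}) / ((1−abq^{2m+1})(1−abq^{2m+2})), C_m = a q^m (1−q^m)(1−bq^m) / ((1−abq^{2m+1})(1−abq^{2m})), and b_n = A_n + C_n. Then, as ε → 0 (ε ≠ 0), b_n tends to (−1)^n, i.e. to 1 if n is even and to −1 if n is odd. -/

import Mathlib

open Filter Real Topology

lemma slope_exp_aux (c : ℝ) :
    Tendsto (fun ε : ℝ => (1 - Real.exp (c*ε))/ε) (𝓝[≠] (0:ℝ)) (𝓝 (-c)) := by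
  have h : HasDerivAt (fun ε : ℝ => 1 - Real.exp (c*ε)) (-c) 0 := by
    have h1 : HasDerivAt (fun ε : ℝ => c*ε) c 0 := by simpa using (hasDerivAt_id (0:ℝ)).const_mul c
    have h2 := (Real.hasDerivAt_exp (c*0)).comp 0 h1
    simpa using h2.const_sub 1
  have h3 := hasDerivAt_iff_tendsto_slope.mp h
  have he : (fun ε : ℝ => (1 - Real.exp (c*ε))/ε) = fun ε : ℝ => ε⁻¹ * (1 - Real.exp (c*ε)) := by
    funext ε; rw [div_eq_inv_mul]
  rw [he]
  simpa [slope_fun_def, Real.exp_zero, div_eq_inv_mul] using h3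

lemma ratio_exp_aux (c d : ℝ) (hd : d ≠ 0) :
    Tendsto (fun ε : ℝ => (1 - Real.exp (c*ε))/(1 - Real.exp (d*ε))) (𝓝[≠] (0:ℝ)) (𝓝 (c/d)) := by
  have h := (slope_exp_aux c).div (slope_exp_aux d) (neg_ne_zero.mpr hd)
  rw [neg_div_neg_eq] at h
  refine h.congr' ?_
  filter_upwards [self_mem_nhdsWithin] with ε hε
  have hε' : ε ≠ 0 := hε
  show (1 - Real.exp (c*ε))/ε / ((1 - Real.exp (d*ε))/ε) = _
  rw [div_div_div_cancel_right₀ hε']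

lemma ratioB_aux (β : ℝ) (i j : ℕ) (hj : (j:ℝ) + β ≠ 0) :
    Tendsto (fun ε : ℝ => (1 - Real.exp ε ^ i * Real.exp (β*ε))/(1 - Real.exp ε ^ j * Real.exp (β*ε)))
      (𝓝[≠] (0:ℝ)) (𝓝 (((i:ℝ)+β)/((j:ℝ)+β))) := by
  refine (ratio_exp_aux ((i:ℝ)+β) ((j:ℝ)+β) hj).congr fun ε => ?_
  have h1 : ∀ m : ℕ, Real.exp (((m:ℝ)+β)*ε) = Real.exp ε ^ m * Real.exp (β*ε) := by
    intro m
    rw [add_mul, Real.exp_add, Real.exp_nat_mul]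
  rw [h1, h1]

lemma ratioN_aux (β : ℝ) (i j : ℕ) (hj : (j:ℝ) + β ≠ 0) :
    Tendsto (fun ε : ℝ => (1 - Real.exp ε ^ i)/(1 - Real.exp ε ^ j * Real.exp (β*ε)))
      (𝓝[≠] (0:ℝ)) (𝓝 ((i:ℝ)/((j:ℝ)+β))) := by
  refine (ratio_exp_aux ((i:ℝ)) ((j:ℝ)+β) hj).congr fun ε => ?_
  rw [add_mul, Real.exp_add, Real.exp_nat_mul, Real.exp_nat_mul]

lemma tendsto_one_aux {f g : ℝ → ℝ} (hf : Continuous f) (hg : Continuous g)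
    (hf0 : f 0 = 2) (hg0 : g 0 = 2) (i : ℕ) :
    Tendsto (fun ε : ℝ => Real.exp ε ^ i * f ε / g ε) (𝓝[≠] (0:ℝ)) (𝓝 1) := by
  have hc : ContinuousAt (fun ε : ℝ => Real.exp ε ^ i * f ε / g ε) 0 :=
    ContinuousAt.div (by fun_prop) hg.continuousAt (by rw [hg0]; norm_num)
  refine Tendsto.mono_left ?_ nhdsWithin_le_nhds
  have h2 : Real.exp 0 ^ i * f 0 / g 0 = 1 := by
    rw [hf0, hg0, Real.exp_zero]; norm_num
  exact h2 ▸ hc.tendsto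

theorem bn_limit (β : ℝ) (hβ : -1 < β) (n : ℕ) :
    Filter.Tendsto
      (fun ε : ℝ =>
        let q : ℝ := -Real.exp ε
        let b : ℝ := -Real.exp (β * ε)
        let a : ℝ := q ^ 2
        q ^ n * (1 - a * q ^ (n + 1)) * (1 - a * b * q ^ (n + 1)) /
            ((1 - a * b * q ^ (2 * n + 1)) * (1 - a * b * q ^ (2 * n + 2))) +
          a * q ^ n * (1 - q ^ n) * (1 - b * q ^ n) /
            ((1 - a * b * q ^ (2 * n + 1)) * (1 - a * b * q ^ (2 * n))))
      (nhdsWithin 0 ({0}ᶜ : Set ℝ))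
      (nhds ((-1 : ℝ) ^ n)) := by
  have hn0 : (0:ℝ) ≤ (n:ℝ) := n.cast_nonneg
  have hden : ((2*n+3 : ℕ) : ℝ) + β ≠ 0 := by push_cast; nlinarith
  rcases Nat.even_or_odd n with hn | hn
  · -- even case
    have hA1 : Tendsto (fun ε : ℝ => Real.exp ε ^ n * (1 + Real.exp ε ^ (n+3)) /
        (1 + Real.exp ε ^ (2*n+4) * Real.exp (β*ε))) (𝓝[≠] (0:ℝ)) (𝓝 1) :=
      tendsto_one_aux (by fun_prop) (by fun_prop) (by norm_num) (by norm_num) n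
    have hA2 := ratioB_aux β (n+3) (2*n+3) hden
    have hC1 : Tendsto (fun ε : ℝ => Real.exp ε ^ (n+2) * (1 + Real.exp ε ^ n * Real.exp (β*ε)) /
        (1 + Real.exp ε ^ (2*n+2) * Real.exp (β*ε))) (𝓝[≠] (0:ℝ)) (𝓝 1) :=
      tendsto_one_aux (by fun_prop) (by fun_prop) (by norm_num) (by norm_num) (n+2)
    have hC2 := ratioN_aux β n (2*n+3) hden
    have key := (hA1.mul hA2).add (hC1.mul hC2)
    have hval : (1:ℝ) * ((((n+3:ℕ):ℝ)+β)/(((2*n+3:ℕ):ℝ)+β)) +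
        1 * (((n:ℕ):ℝ)/(((2*n+3:ℕ):ℝ)+β)) = (-1:ℝ)^n := by
      rw [hn.neg_one_pow, one_mul, one_mul, ← add_div, div_eq_one_iff_eq hden]
      push_cast; ring
    rw [hval] at key
    refine key.congr fun ε => ?_
    show _ = _
    simp only
    have e2 : (-Real.exp ε)^2 = Real.exp ε^2 := by ring
    have epn : (-Real.exp ε)^n = Real.exp ε^n := hn.neg_pow _
    have epn1 : (-Real.exp ε)^(n+1) = -Real.exp ε^(n+1) := hn.add_one.neg_pow _
    have e2n1 : (-Real.exp ε)^(2*n+1) = -Real.exp ε^(2*n+1) := (odd_two_mul_add_one n).neg_pow _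
    have hE22 : Even (2*n+2) := ⟨n+1, by ring⟩
    have e2n2 : (-Real.exp ε)^(2*n+2) = Real.exp ε^(2*n+2) := hE22.neg_pow _
    have e2n : (-Real.exp ε)^(2*n) = Real.exp ε^(2*n) := (even_two_mul n).neg_pow _
    rw [e2, epn, epn1, e2n1, e2n2, e2n, div_mul_div_comm, div_mul_div_comm]
    congr 1 <;> congr 1 <;> ring
  · -- odd case
    have hA1 : Tendsto (fun ε : ℝ => Real.exp ε ^ n * (1 + Real.exp ε ^ (n+3) * Real.exp (β*ε)) /
        (1 + Real.exp ε ^ (2*n+4) * Real.exp (β*ε))) (𝓝[≠] (0:ℝ)) (𝓝 1) :=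
      tendsto_one_aux (by fun_prop) (by fun_prop) (by norm_num) (by norm_num) n
    have hA2 := ratioN_aux β (n+3) (2*n+3) hden
    have hC1 : Tendsto (fun ε : ℝ => Real.exp ε ^ (n+2) * (1 + Real.exp ε ^ n) /
        (1 + Real.exp ε ^ (2*n+2) * Real.exp (β*ε))) (𝓝[≠] (0:ℝ)) (𝓝 1) :=
      tendsto_one_aux (by fun_prop) (by fun_prop) (by norm_num) (by norm_num) (n+2)
    have hC2 := ratioB_aux β n (2*n+3) hden
    have key := ((hA1.neg).mul hA2).add ((hC1.neg).mul hC2)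
    have hval : -(1:ℝ) * ((((n+3:ℕ):ℝ))/(((2*n+3:ℕ):ℝ)+β)) +
        -1 * ((((n:ℕ):ℝ)+β)/(((2*n+3:ℕ):ℝ)+β)) = (-1:ℝ)^n := by
      rw [hn.neg_one_pow, neg_one_mul, neg_one_mul, ← neg_add, ← add_div,
        neg_eq_iff_eq_neg, neg_neg, div_eq_one_iff_eq hden]
      push_cast; ring
    rw [hval] at key
    refine key.congr fun ε => ?_
    show _ = _
    simp only
    have e2 : (-Real.exp ε)^2 = Real.exp ε^2 := by ring
    have epn : (-Real.exp ε)^n = -Real.exp ε^n := hn.neg_pow _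
    have epn1 : (-Real.exp ε)^(n+1) = Real.exp ε^(n+1) := hn.add_one.neg_pow _
    have e2n1 : (-Real.exp ε)^(2*n+1) = -Real.exp ε^(2*n+1) := (odd_two_mul_add_one n).neg_pow _
    have hE22 : Even (2*n+2) := ⟨n+1, by ring⟩
    have e2n2 : (-Real.exp ε)^(2*n+2) = Real.exp ε^(2*n+2) := hE22.neg_pow _
    have e2n : (-Real.exp ε)^(2*n) = Real.exp ε^(2*n) := (even_two_mul n).neg_pow _
    rw [e2, epn, epn1, e2n1, e2n2, e2n, ← neg_div, ← neg_div,
      div_mul_div_comm, div_mul_div_comm]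
    congr 1 <;> congr 1 <;> ring
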